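/- Let p solve Ωp = 2var_ω(p)u with u^T p = 1 on the full node set, and let p' solve the analogous equation on V = N \ {x} (for resistance matrix Ω_{VV}). Then p' = p - (p_x/k_x)·∑_{j∼x} c_{xj}(e_x - e_j) and var_ω(p') = var_ω(p) - p_x^2/k_x. -/

import Mathlib

open Finset Matrix

/-- Let `p` solve `Ωp = 2 var_ω(p) u`, `uᵀp = 1` on the full node set of a connected weighted
graph, and let `p'` (supported on `V = N \ {x}`) solve the analogous equation for the submatrix
`Ω_{VV}` (the resistance matrix of the Schur-complement graph). Then
`p' = p - (p_x/k_x) ∑_{j∼x} c_{xj} (e_x - e_j)` and `var_ω(p') = var_ω(p) - p_x²/k_x`. -/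
theorem remove_node_solution_update {n : ℕ} (c : Matrix (Fin n) (Fin n) ℝ)
    (hcsym : c.IsSymm) (hcdiag : ∀ i, c i i = 0) (hc0 : ∀ i j, 0 ≤ c i j)
    (Q Qd : Matrix (Fin n) (Fin n) ℝ)
    (hQ : ∀ i j, Q i j = if i = j then ∑ l, c i l else -c i j)
    (h1 : Q * Qd * Q = Q) (h2 : Qd * Q * Qd = Qd)
    (h3 : (Q * Qd)ᵀ = Q * Qd) (h4 : (Qd * Q)ᵀ = Qd * Q)
    (hconn : Q * Qd = 1 - ((n : ℝ))⁻¹ • Matrix.of (fun _ _ => (1 : ℝ)))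
    (Ω : Matrix (Fin n) (Fin n) ℝ)
    (hΩ : ∀ i j, Ω i j =
      (Pi.single i 1 - Pi.single j 1) ⬝ᵥ Qd *ᵥ (Pi.single i 1 - Pi.single j 1))
    (x : Fin n) (kx : ℝ) (hkx : kx = ∑ j, c x j) (hkx0 : 0 < kx)
    (p : Fin n → ℝ)
    (hp : Ω *ᵥ p = fun _ => 2 * ((1 / 2) * (p ⬝ᵥ Ω *ᵥ p))) (hpsum : ∑ i, p i = 1)
    (p' : Fin n → ℝ) (hp'x : p' x = 0)
    (hp' : ∀ i, i ≠ x → (Ω *ᵥ p') i = 2 * ((1 / 2) * (p' ⬝ᵥ Ω *ᵥ p')))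
    (hp'sum : ∑ i, p' i = 1) :
    (∀ i, p' i = p i - (p x / kx) *
        ((if i = x then kx else 0) - c x i))
      ∧ (1 / 2) * (p' ⬝ᵥ Ω *ᵥ p') = (1 / 2) * (p ⬝ᵥ Ω *ᵥ p) - (p x) ^ 2 / kx := by
  have hn0 : (n : ℝ) ≠ 0 := Nat.cast_ne_zero.mpr x.pos.ne'
  have hkne : kx ≠ 0 := ne_of_gt hkx0
  have hcs : ∀ i j, c i j = c j i := fun i j => hcsym.apply j i
  -- symmetry of Q
  have hQsym : ∀ i j, Q i j = Q j i := by
    intro i j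
    rw [hQ, hQ]
    rcases eq_or_ne i j with h | h
    · simp [h]
    · simp only [if_neg h, if_neg (Ne.symm h), neg_inj]
      exact hcs i j
  have hQT : Qᵀ = Q := by ext i j; exact hQsym j i
  -- row sums of Q vanish
  have hQrow : ∀ i, ∑ j, Q i j = 0 := by
    intro i
    have h : ∀ j, Q i j = (if j = i then ∑ l, c i l else 0) - c i j := by
      intro j
      rw [hQ]
      rcases eq_or_ne i j with h | h
      · subst h; simp [hcdiag]
      · simp [h, Ne.symm h]
    rw [Finset.sum_congr rfl fun j _ => h j, Finset.sum_sub_distrib]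
    simp
  have hQcol : ∀ j, ∑ i, Q i j = 0 := by
    intro j
    rw [Finset.sum_congr rfl fun i _ => hQsym i j]
    exact hQrow j
  set Jm : Matrix (Fin n) (Fin n) ℝ := Matrix.of (fun _ _ => (1 : ℝ)) with hJm
  have hQJ : Q * Jm = 0 := by
    ext i j; simp [Matrix.mul_apply, hJm, hQrow i]
  have hone : (1 : Matrix (Fin n) (Fin n) ℝ) = Q * Qd + (n : ℝ)⁻¹ • Jm := by
    rw [hconn]; abel
  have hQP : Q * (Qd * Q) = Q := by rw [← Matrix.mul_assoc, h1]
  -- Qd * Q = 1 - J/n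
  have hP : Qd * Q = 1 - (n : ℝ)⁻¹ • Jm := by
    set M := Qd * Q - (1 - (n : ℝ)⁻¹ • Jm) with hM
    have hJmT : Jmᵀ = Jm := by ext i j; simp [hJm]
    have hMT : Mᵀ = M := by
      rw [hM, Matrix.transpose_sub, h4, Matrix.transpose_sub, Matrix.transpose_one,
        Matrix.transpose_smul, hJmT]
    have hQM : Q * M = 0 := by
      rw [hM, Matrix.mul_sub, hQP, Matrix.mul_sub, Matrix.mul_one, Matrix.mul_smul, hQJ]
      simp
    have hMQ : M * Q = 0 := by
      have h := congrArg Matrix.transpose hQM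
      rwa [Matrix.transpose_mul, hMT, hQT, Matrix.transpose_zero] at h
    have hMrow : ∀ i, ∑ k, (Qd * Q) i k = 0 := by
      intro i
      simp only [Matrix.mul_apply]
      rw [Finset.sum_comm]
      simp only [← Finset.mul_sum]
      simp [hQrow]
    have hMJ : M * Jm = 0 := by
      ext i j
      have hterm : ∀ k, M i k * Jm k j
          = (Qd * Q) i k - ((if i = k then (1 : ℝ) else 0) - (n : ℝ)⁻¹) := by
        intro k
        simp [hM, hJm, Matrix.sub_apply, Matrix.one_apply, Matrix.smul_apply]
      rw [Matrix.mul_apply, Finset.sum_congr rfl fun k _ => hterm k, Finset.sum_sub_distrib,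
        hMrow i]
      have h5 : ∑ k : Fin n, ((if i = k then (1 : ℝ) else 0) - (n : ℝ)⁻¹) = 0 := by
        rw [Finset.sum_sub_distrib, Finset.sum_ite_eq]
        simp [Finset.card_univ, mul_inv_cancel₀ hn0]
      rw [h5]
      simp
    have hM0 : M = 0 := by
      calc M = M * (Q * Qd) + (n : ℝ)⁻¹ • (M * Jm) := by
              rw [← Matrix.mul_smul, ← Matrix.mul_add, ← hone, Matrix.mul_one]
        _ = 0 := by rw [← Matrix.mul_assoc, hMQ, hMJ, Matrix.zero_mul, smul_zero, add_zero]
    have := sub_eq_zero.mp (hM ▸ hM0)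
    exact this
  have hQQdT : Q * Qdᵀ = 1 - (n : ℝ)⁻¹ • Jm := by
    have h : Q * Qdᵀ = (Qd * Q)ᵀ := by rw [Matrix.transpose_mul, hQT]
    rw [h, h4, hP]
  -- resistance matrix entries
  set d : Fin n → ℝ := fun i => Qd i i with hd
  have hΩ' : ∀ i j, Ω i j = d i + d j - (Qd i j + Qd j i) := by
    intro i j
    rw [hΩ]
    have hv : Qd *ᵥ (Pi.single i 1 - Pi.single j 1) = fun k => Qd k i - Qd k j := by
      rw [Matrix.mulVec_sub, Matrix.mulVec_single, Matrix.mulVec_single]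
      funext k; simp
    rw [hv, sub_dotProduct, single_dotProduct, single_dotProduct]
    simp only [hd, one_mul]
    ring
  have hΩsym : ∀ i j, Ω i j = Ω j i := by intro i j; rw [hΩ' i j, hΩ' j i]; ring
  have hΩT : Ωᵀ = Ω := by ext i j; exact hΩsym j i
  have hΩmul : ∀ (w : Fin n → ℝ) (i : Fin n), (Ω *ᵥ w) i =
      d i * (∑ j, w j) + (∑ j, d j * w j) - ((Qd *ᵥ w) i + (Qdᵀ *ᵥ w) i) := by
    intro w i
    simp only [Matrix.mulVec, dotProduct, Matrix.transpose_apply, Finset.mul_sum]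
    rw [← Finset.sum_add_distrib, ← Finset.sum_add_distrib, ← Finset.sum_sub_distrib]
    exact Finset.sum_congr rfl fun j _ => by rw [hΩ' i j]; ring
  -- the vector (1 - J/n) applied
  have hIJ : ∀ (v : Fin n → ℝ) (i : Fin n),
      ((1 - (n : ℝ)⁻¹ • Jm) *ᵥ v) i = v i - (n : ℝ)⁻¹ * (∑ j, v j) := by
    intro v i
    rw [Matrix.sub_mulVec, Matrix.smul_mulVec, Matrix.one_mulVec]
    simp [hJm, Matrix.mulVec, dotProduct]
  set C : ℝ := 2 * ((1 / 2) * (p ⬝ᵥ Ω *ᵥ p)) with hC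
  set D : ℝ := ∑ j, d j * p j with hD
  have hwp : ∀ i, (Qd *ᵥ p) i + (Qdᵀ *ᵥ p) i = d i + (D - C) := by
    intro i
    have h0 : (Ω *ᵥ p) i = C := by rw [hp]
    rw [hΩmul p i, hpsum, ← hD] at h0
    linarith
  have hstar : ∀ i, (Q *ᵥ d) i = 2 * p i - 2 * (n : ℝ)⁻¹ := by
    intro i
    have hveq : (Qd *ᵥ p) + (Qdᵀ *ᵥ p) = fun k => d k + (D - C) := by
      funext k
      exact hwp k
    have e1 := congrArg (Matrix.mulVec Q) hveq
    rw [Matrix.mulVec_add, Matrix.mulVec_mulVec, Matrix.mulVec_mulVec, hconn, hQQdT] at e1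
    have e2 := congrFun e1 i
    simp only [Pi.add_apply, hIJ p i, hpsum] at e2
    have e3 : (Q *ᵥ (fun k => d k + (D - C))) i = (Q *ᵥ d) i := by
      simp only [Matrix.mulVec, dotProduct, mul_add, Finset.sum_add_distrib]
      rw [← Finset.sum_mul, hQrow i]
      ring
    rw [e3] at e2
    rw [← e2]; ring
  -- the p' equation
  set C' : ℝ := 2 * ((1 / 2) * (p' ⬝ᵥ Ω *ᵥ p')) with hC'
  set D' : ℝ := ∑ j, d j * p' j with hD'
  set γ : ℝ := (Qd *ᵥ p') x + (Qdᵀ *ᵥ p') x - d x - (D' - C') with hγ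
  have hwp' : ∀ i, (Qd *ᵥ p') i + (Qdᵀ *ᵥ p') i
      = d i + (D' - C') + (if i = x then γ else 0) := by
    intro i
    rcases eq_or_ne i x with h | h
    · rw [h, if_pos rfl, hγ]
      ring
    · have h0 := hp' i h
      rw [hΩmul p' i, hp'sum, ← hD'] at h0
      rw [if_neg h]
      linarith
  have hstar' : ∀ i, (Q *ᵥ d) i + γ * Q i x = 2 * p' i - 2 * (n : ℝ)⁻¹ := by
    intro i
    have hveq : (Qd *ᵥ p') + (Qdᵀ *ᵥ p')
        = fun k => d k + (D' - C') + (if k = x then γ else 0) := by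
      funext k
      exact hwp' k
    have e1 := congrArg (Matrix.mulVec Q) hveq
    rw [Matrix.mulVec_add, Matrix.mulVec_mulVec, Matrix.mulVec_mulVec, hconn, hQQdT] at e1
    have e2 := congrFun e1 i
    simp only [Pi.add_apply, hIJ p' i, hp'sum] at e2
    have e3 : (Q *ᵥ (fun k => d k + (D' - C') + (if k = x then γ else 0))) i
        = (Q *ᵥ d) i + γ * Q i x := by
      simp only [Matrix.mulVec, dotProduct, mul_add, Finset.sum_add_distrib]
      rw [← Finset.sum_mul, hQrow i]
      have e4 : ∑ j, Q i j * (if j = x then γ else 0) = Q i x * γ := by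
        rw [Finset.sum_congr rfl fun j _ => mul_ite (j = x) (Q i j) γ 0]
        simp [Finset.sum_ite_eq']
      rw [e4]
      ring
    rw [e3] at e2
    rw [← e2]; ring
  have hQxx : Q x x = kx := by rw [hQ x x, if_pos rfl, hkx]
  have hγval : γ = -(2 * (p x / kx)) := by
    have e1 := hstar' x
    have e2 := hstar x
    rw [hp'x, hQxx, e2] at e1
    have h5 : γ * kx = -(2 * p x) := by linear_combination e1
    field_simp
    linear_combination h5
  have hps : ∀ i, p' i = p i - (p x / kx) * Q i x := by
    intro i
    have e1 := hstar' i
    rw [hstar i, hγval] at e1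
    linarith [e1]
  -- first conjunct
  have hQix : ∀ i, Q i x = (if i = x then kx else 0) - c x i := by
    intro i
    rw [hQ]
    rcases eq_or_ne i x with h | h
    · subst h; simp [hcdiag, hkx]
    · rw [if_neg h, if_neg h, hcs x i]
      ring
  have first : ∀ i, p' i = p i - (p x / kx) * ((if i = x then kx else 0) - c x i) := by
    intro i
    rw [← hQix i]
    exact hps i
  refine ⟨first, ?_⟩
  -- second conjunct
  set t : ℝ := p x / kx with ht
  set s : Fin n → ℝ := fun i => Q i x with hs
  have hp'v : p' = p - t • s := by
    funext i
    simp only [Pi.sub_apply, Pi.smul_apply, smul_eq_mul, hs, ht]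
    exact hps i
  have hssum : ∑ i, s i = 0 := hQcol x
  have hsΩp : s ⬝ᵥ (Ω *ᵥ p) = 0 := by
    rw [hp]
    simp only [dotProduct]
    rw [← Finset.sum_mul, hssum, zero_mul]
  have hpΩs : p ⬝ᵥ (Ω *ᵥ s) = 0 := by
    rw [Matrix.dotProduct_mulVec, ← Matrix.mulVec_transpose, hΩT, dotProduct_comm]
    exact hsΩp
  have hsQds : s ⬝ᵥ (Qd *ᵥ s) = kx := by
    have hsv : s = Q *ᵥ Pi.single x 1 := by
      funext i
      rw [Matrix.mulVec_single]
      simp [hs]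
    rw [hsv, Matrix.mulVec_mulVec, dotProduct_comm, Matrix.dotProduct_mulVec,
      ← Matrix.mulVec_transpose, hQT, Matrix.mulVec_mulVec, ← Matrix.mul_assoc, h1,
      dotProduct_single]
    simp [Matrix.mulVec_single, hQxx]
  have hsQdTs : s ⬝ᵥ (Qdᵀ *ᵥ s) = kx := by
    rw [Matrix.mulVec_transpose, dotProduct_comm, ← Matrix.dotProduct_mulVec]
    exact hsQds
  have hsΩs : s ⬝ᵥ (Ω *ᵥ s) = -(2 * kx) := by
    have hv : ∀ i, (Ω *ᵥ s) i = (∑ j, d j * s j) - ((Qd *ᵥ s) i + (Qdᵀ *ᵥ s) i) := by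
      intro i
      rw [hΩmul s i, hssum]
      ring
    simp only [dotProduct]
    rw [Finset.sum_congr rfl fun i _ => by rw [hv i]]
    simp only [mul_sub, mul_add]
    rw [Finset.sum_sub_distrib, ← Finset.sum_mul, hssum, zero_mul, Finset.sum_add_distrib]
    have h1' : ∑ i, s i * (Qd *ᵥ s) i = kx := hsQds
    have h2' : ∑ i, s i * (Qdᵀ *ᵥ s) i = kx := hsQdTs
    rw [h1', h2']
    ring
  have hfinal : p' ⬝ᵥ Ω *ᵥ p' = p ⬝ᵥ Ω *ᵥ p - t ^ 2 * (2 * kx) := by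
    rw [hp'v, Matrix.mulVec_sub, Matrix.mulVec_smul]
    simp only [sub_dotProduct, dotProduct_sub, smul_dotProduct,
      dotProduct_smul, smul_eq_mul]
    rw [hpΩs, hsΩp, hsΩs]
    ring
  rw [hfinal, ht]
  field_simp
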